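/- Hamilton–Jacobi theorem for the Hamilton–De Donder–Weyl equations (coordinate form). Let ρ(x,u) and γ^i_α(x,u) be smooth functions such that the m-form γ̄ = ρ d_mx + γ^i_α du^α∧(∂_i⌟d_mx) on E is closed, i.e. ∂ρ/∂u^α = Σ_i ∂γ^i_α/∂x^i and ∂γ^i_α/∂u^β = ∂γ^i_β/∂u^α for all indices. Assume the induced connection h^γ is flat, i.e. through every point (x₀,u₀) ∈ E there passes an integral section σ of h^γ with σ(x₀) = u₀. Then the following are equivalent: (1) for every integral section σ of h^γ, the map x ↦ (x, σ(x), γ^i_α(x,σ(x))) satisfies the Hamilton–De Donder–Weyl equations ∂σ^α/∂x^i = (∂H/∂p^i_α)∘(γ∘σ) and Σ_i ∂/∂x^i[γ^i_α(x,σ(x))] = −(∂H/∂u^α)∘(γ∘σ); (2) the m-form h∘γ = −H(x,u,γ(x,u)) d_mx + γ^i_α(x,u) du^α∧(∂_i⌟d_mx) on E is closed, which (given the symmetry ∂γ^i_α/∂u^β = ∂γ^i_β/∂u^α) amounts to Σ_i ∂γ^i_α/∂x^i + (∂H/∂u^α)(x,u,γ(x,u)) + (∂H/∂p^i_β)(x,u,γ(x,u))·∂γ^i_β/∂u^α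 = 0 for all (x,u). -/

import Mathlib

open scoped BigOperators

noncomputable section

/-- `J¹π* = ℝ^m × ℝ^N × ℝ^{mN}` in coordinates `(xⁱ, u^α, pⁱ_α)`. -/
abbrev Jb (m N : ℕ) : Type := (Fin m → ℝ) × (Fin N → ℝ) × (Fin m → Fin N → ℝ)

/-- The coordinate vector `∂/∂u^α` on `J¹π*`. -/
def UdirJ (m N : ℕ) (α : Fin N) : Jb m N := (0, Pi.single α 1, 0)

/-- The coordinate vector `∂/∂pⁱ_α` on `J¹π*`. -/
def PdirJ (m N : ℕ) (i : Fin m) (α : Fin N) : Jb m N := (0, 0, Pi.single i (Pi.single α 1))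

/-- The point `γ(x,u) = (x, u, γⁱ_α(x,u))` of `J¹π*` over `(x,u) ∈ E`. -/
def gSec (m N : ℕ) (γ : (Fin m → ℝ) × (Fin N → ℝ) → Fin m → Fin N → ℝ)
    (e : (Fin m → ℝ) × (Fin N → ℝ)) : Jb m N := (e.1, e.2, γ e)

/-- `σ : ℝ^m → ℝ^N` is an integral section of the connection `h^γ` induced by the section
`γ` of `J¹π* → E`: `∂σ^α/∂xⁱ(x) = (∂H/∂pⁱ_α)(x, σ(x), γ(x,σ(x)))`. -/
def IsIntegralSec (m N : ℕ) (H : Jb m N → ℝ)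
    (γ : (Fin m → ℝ) × (Fin N → ℝ) → Fin m → Fin N → ℝ)
    (σ : (Fin m → ℝ) → Fin N → ℝ) : Prop :=
  ∀ (x : Fin m → ℝ) (i : Fin m) (α : Fin N),
    fderiv ℝ σ x (Pi.single i 1) α = fderiv ℝ H (gSec m N γ (x, σ x)) (PdirJ m N i α)

/-- Chain-rule key lemma: for an integral section `σ` of `h^γ`,
`∑ᵢ ∂/∂xⁱ[γⁱ_α(x,σ(x))] = ∑ᵢ ∂γⁱ_α/∂xⁱ + ∑ᵢ∑_β (∂H/∂pⁱ_β)·(∂γⁱ_β/∂u^α)` at `(x,σ(x))`,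
using the symmetry `∂γⁱ_α/∂u^β = ∂γⁱ_β/∂u^α`. -/
lemma chain_key (m N : ℕ) (H : Jb m N → ℝ)
    (γ : (Fin m → ℝ) × (Fin N → ℝ) → Fin m → Fin N → ℝ) (hγ : ContDiff ℝ (⊤ : ℕ∞) γ)
    (hclosed₂ : ∀ (e : (Fin m → ℝ) × (Fin N → ℝ)) (i : Fin m) (α β : Fin N),
      fderiv ℝ (fun y => γ y i α) e (0, Pi.single β 1) =
        fderiv ℝ (fun y => γ y i β) e (0, Pi.single α 1))
    (σ : (Fin m → ℝ) → Fin N → ℝ) (hσ : ContDiff ℝ (⊤ : ℕ∞) σ)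
    (hint : IsIntegralSec m N H γ σ) (x : Fin m → ℝ) (α : Fin N) :
    (∑ i : Fin m, fderiv ℝ (fun y => γ (y, σ y) i α) x (Pi.single i 1)) =
      (∑ i : Fin m, fderiv ℝ (fun y => γ y i α) (x, σ x) (Pi.single i 1, 0)) +
        ∑ i : Fin m, ∑ β : Fin N,
          fderiv ℝ H (gSec m N γ (x, σ x)) (PdirJ m N i β) *
            fderiv ℝ (fun y => γ y i β) (x, σ x) (0, Pi.single α 1) := by
  rw [← Finset.sum_add_distrib]
  refine Finset.sum_congr rfl fun i _ => ?_
  have hg : ContDiff ℝ (⊤ : ℕ∞) (fun e => γ e i α) := (contDiff_pi.mp (contDiff_pi.mp hγ i)) α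
  set L := fderiv ℝ (fun e => γ e i α) (x, σ x) with hL
  have hσd : HasFDerivAt σ (fderiv ℝ σ x) x :=
    (hσ.differentiable (by simp) x).hasFDerivAt
  have hmap : HasFDerivAt (fun y : Fin m → ℝ => (y, σ y))
      ((ContinuousLinearMap.id ℝ (Fin m → ℝ)).prod (fderiv ℝ σ x)) x :=
    (hasFDerivAt_id x).prodMk hσd
  have hcomp : HasFDerivAt (fun y => γ (y, σ y) i α)
      (L.comp ((ContinuousLinearMap.id ℝ (Fin m → ℝ)).prod (fderiv ℝ σ x))) x :=
    by have hgd := (hg.differentiable (by simp) (x, σ x)).hasFDerivAt; exact hgd.comp x hmap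
  rw [hcomp.fderiv]
  have step1 : L (Pi.single i 1, fderiv ℝ σ x (Pi.single i 1)) =
      L (Pi.single i 1, 0) + L (0, fderiv ℝ σ x (Pi.single i 1)) := by
    rw [← map_add]
    congr 1
    simp [Prod.ext_iff]
  have step2 : ∀ w : Fin N → ℝ, L (0, w) = ∑ β : Fin N, w β * L (0, Pi.single β 1) := by
    intro w
    have hw : ((0 : Fin m → ℝ), w) =
        ∑ β : Fin N, ((0 : Fin m → ℝ), w β • (Pi.single β 1 : Fin N → ℝ)) := by
      rw [Prod.ext_iff]
      constructor
      · simp [Prod.fst_sum]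
      · rw [Prod.snd_sum]
        funext j
        simp [Pi.single_apply, Finset.sum_ite_eq]
    rw [hw, map_sum]
    refine Finset.sum_congr rfl fun β _ => ?_
    rw [show ((0 : Fin m → ℝ), w β • (Pi.single β 1 : Fin N → ℝ)) =
        w β • ((0 : Fin m → ℝ), (Pi.single β 1 : Fin N → ℝ)) by simp [Prod.smul_mk],
      map_smul, smul_eq_mul]
  simp only [ContinuousLinearMap.coe_comp', Function.comp_apply,
    ContinuousLinearMap.prod_apply, ContinuousLinearMap.coe_id', id_eq]
  rw [step1, step2]
  congr 1
  refine Finset.sum_congr rfl fun β _ => ?_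
  rw [hint x i β, hL, hclosed₂ (x, σ x) i α β]

/-- Hamilton–Jacobi theorem for the Hamilton–De Donder–Weyl equations, in coordinates.
Let `γ̄ = ρ d_mx + γⁱ_α du^α∧(∂_i⌟d_mx)` be a closed `m`-form on `E = ℝ^m × ℝ^N`
(closedness expressed by the two coordinate conditions), and assume the induced connection
`h^γ` is flat (through every point of `E` passes an integral section).  Then:
(1) every integral section `σ` of `h^γ` gives a solution `x ↦ (x, σ(x), γ(x,σ(x)))` of the
HDW equations, if and only if
(2) the `m`-form `h∘γ` is closed, i.e.
`∑ᵢ ∂γⁱ_α/∂xⁱ + ∂H/∂u^α + (∂H/∂pⁱ_β)·∂γⁱ_β/∂u^α = 0` on `J¹π*`-points `(x,u,γ(x,u))`. -/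
theorem hamilton_jacobi_HDW (m N : ℕ)
    (H : Jb m N → ℝ) (hH : ContDiff ℝ (⊤ : ℕ∞) H)
    (ρ : (Fin m → ℝ) × (Fin N → ℝ) → ℝ) (hρ : ContDiff ℝ (⊤ : ℕ∞) ρ)
    (γ : (Fin m → ℝ) × (Fin N → ℝ) → Fin m → Fin N → ℝ) (hγ : ContDiff ℝ (⊤ : ℕ∞) γ)
    -- closedness of `γ̄`:  `∂ρ/∂u^α = ∑ᵢ ∂γⁱ_α/∂xⁱ`
    (hclosed₁ : ∀ (e : (Fin m → ℝ) × (Fin N → ℝ)) (α : Fin N),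
      fderiv ℝ ρ e (0, Pi.single α 1) =
        ∑ i : Fin m, fderiv ℝ (fun y => γ y i α) e (Pi.single i 1, 0))
    -- closedness of `γ̄`:  `∂γⁱ_α/∂u^β = ∂γⁱ_β/∂u^α`
    (hclosed₂ : ∀ (e : (Fin m → ℝ) × (Fin N → ℝ)) (i : Fin m) (α β : Fin N),
      fderiv ℝ (fun y => γ y i α) e (0, Pi.single β 1) =
        fderiv ℝ (fun y => γ y i β) e (0, Pi.single α 1))
    -- flatness of `h^γ`: an integral section passes through every point of `E`
    (hflat : ∀ (x₀ : Fin m → ℝ) (u₀ : Fin N → ℝ),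
      ∃ σ : (Fin m → ℝ) → Fin N → ℝ,
        ContDiff ℝ (⊤ : ℕ∞) σ ∧ IsIntegralSec m N H γ σ ∧ σ x₀ = u₀) :
    -- (1) every integral section of `h^γ` solves the HDW equations through `γ`
    (∀ σ : (Fin m → ℝ) → Fin N → ℝ, ContDiff ℝ (⊤ : ℕ∞) σ → IsIntegralSec m N H γ σ →
      (∀ (x : Fin m → ℝ) (i : Fin m) (α : Fin N),
        fderiv ℝ σ x (Pi.single i 1) α =
          fderiv ℝ H (gSec m N γ (x, σ x)) (PdirJ m N i α)) ∧
      (∀ (x : Fin m → ℝ) (α : Fin N),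
        (∑ i : Fin m, fderiv ℝ (fun y => γ (y, σ y) i α) x (Pi.single i 1)) =
          -(fderiv ℝ H (gSec m N γ (x, σ x)) (UdirJ m N α)))) ↔
    -- (2) the `m`-form `h∘γ` is closed
    (∀ (e : (Fin m → ℝ) × (Fin N → ℝ)) (α : Fin N),
      (∑ i : Fin m, fderiv ℝ (fun y => γ y i α) e (Pi.single i 1, 0)) +
        fderiv ℝ H (gSec m N γ e) (UdirJ m N α) +
        ∑ i : Fin m, ∑ β : Fin N,
          fderiv ℝ H (gSec m N γ e) (PdirJ m N i β) *
            fderiv ℝ (fun y => γ y i β) e (0, Pi.single α 1) = 0) := by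
  constructor
  · intro h1 e α
    obtain ⟨σ, hσs, hσi, hσ0⟩ := hflat e.1 e.2
    have key := chain_key m N H γ hγ hclosed₂ σ hσs hσi e.1 α
    have h2 := (h1 σ hσs hσi).2 e.1 α
    have he : (e.1, σ e.1) = e := by rw [hσ0]
    rw [he] at key h2
    rw [key] at h2
    linarith
  · intro h2 σ hσs hσi
    refine ⟨hσi, fun x α => ?_⟩
    have key := chain_key m N H γ hγ hclosed₂ σ hσs hσi x α
    have h := h2 (x, σ x) α
    rw [key]
    linarith
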